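/- Let η > 0, γ ≥ 0, and let x_z : ℝ → ℝ be differentiable with |x_z'(t)| ≤ γ for all t. Suppose x_u : ℝ → ℝ is differentiable, satisfies x_u'(t) = η(x_u(t) − x_z(t)) for all t, and the function x_u − x_z is bounded on [t₀, ∞). Then necessarily x_u(t₀) = η ∫_{t₀}^∞ e^{−η(τ−t₀)} x_z(τ) dτ. Combined with the converse (boundedness under the stability condition), x_u − x_z is bounded on [t₀, ∞) if and only if x_u(t₀) = η ∫_{t₀}^∞ e^{−η(τ−t₀)} x_z(τ) dτ. -/

import Mathlib

open MeasureTheory Real Set Filter Topology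

/-- `u * exp (-u) ≤ 1` scaled: `s * exp (-b*s) ≤ (2/b) * exp (-(b/2)*s)`. -/
lemma key_bound {b s : ℝ} (hb : 0 < b) (hs : 0 ≤ s) :
    s * Real.exp (-b * s) ≤ (2 / b) * Real.exp (-(b / 2) * s) := by
  have h1 : b / 2 * s ≤ Real.exp (b / 2 * s) := by
    have := Real.add_one_le_exp (b / 2 * s); linarith
  have h2 : Real.exp (-b * s) = Real.exp (-(b / 2) * s) * Real.exp (-(b / 2) * s) := by
    rw [← Real.exp_add]; ring_nf
  have h3 : Real.exp (-(b / 2) * s) * Real.exp (b / 2 * s) = 1 := by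
    rw [← Real.exp_add]; ring_nf; exact Real.exp_zero
  have h4 : (b / 2 * s) * Real.exp (-(b / 2) * s) ≤ 1 := by
    calc (b / 2 * s) * Real.exp (-(b / 2) * s)
        ≤ Real.exp (b / 2 * s) * Real.exp (-(b / 2) * s) := by
          apply mul_le_mul_of_nonneg_right h1 (Real.exp_pos _).le
      _ = 1 := by rw [mul_comm]; exact h3
  have hbpos : (0:ℝ) < 2 / b := by positivity
  calc s * Real.exp (-b * s)
      = (2 / b) * ((b / 2 * s) * Real.exp (-(b / 2) * s)) * Real.exp (-(b / 2) * s) := by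
        rw [h2]; field_simp
    _ ≤ (2 / b) * 1 * Real.exp (-(b / 2) * s) := by
        apply mul_le_mul_of_nonneg_right _ (Real.exp_pos _).le
        exact mul_le_mul_of_nonneg_left h4 hbpos.le
    _ = (2 / b) * Real.exp (-(b / 2) * s) := by ring

lemma exp_shift_integrable {b : ℝ} (hb : 0 < b) (t : ℝ) :
    IntegrableOn (fun τ => Real.exp (-b * (τ - t))) (Set.Ioi t) := by
  have h : IntegrableOn (fun x => Real.exp (b * t) * Real.exp (-b * x)) (Set.Ioi t) :=
    (exp_neg_integrableOn_Ioi t hb).const_mul (Real.exp (b * t))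
  refine IntegrableOn.congr_fun h (fun x _ => ?_) measurableSet_Ioi
  rw [← Real.exp_add]; ring_nf

lemma exp_shift_integral {b : ℝ} (hb : 0 < b) (t : ℝ) :
    ∫ τ in Set.Ioi t, Real.exp (-b * (τ - t)) = 1 / b := by
  have hderiv : ∀ x ∈ Set.Ici t,
      HasDerivAt (fun τ => -Real.exp (-b * (τ - t)) / b) (Real.exp (-b * (x - t))) x := by
    intro x _
    have h1 : HasDerivAt (fun τ : ℝ => -b * (τ - t)) (-b) x := by
      simpa using ((hasDerivAt_id x).sub_const t).const_mul (-b)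
    have := (h1.exp.neg.div_const b)
    exact this.congr_deriv (by field_simp)
  have hlim : Tendsto (fun τ => -Real.exp (-b * (τ - t)) / b) atTop (𝓝 0) := by
    have h1 : Tendsto (fun τ : ℝ => -b * (τ - t)) atTop atBot := by
      apply Tendsto.const_mul_atTop_of_neg (neg_neg_iff_pos.mpr hb)
      exact tendsto_atTop_add_const_right atTop (-t) tendsto_id |>.congr (fun x => by simp [sub_eq_add_neg])
    have := (Real.tendsto_exp_atBot.comp h1).neg.div_const b
    simpa using this
  have := integral_Ioi_of_hasDerivAt_of_tendsto' hderiv (exp_shift_integrable hb t) hlim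
  rw [this, sub_self, mul_zero, Real.exp_zero]
  ring

lemma lin_mul_exp_tendsto {b : ℝ} (hb : 0 < b) (C D : ℝ) :
    Tendsto (fun s => (C + D * s) * Real.exp (-b * s)) atTop (𝓝 0) := by
  have hbs : Tendsto (fun s : ℝ => b * s) atTop atTop :=
    Tendsto.const_mul_atTop hb tendsto_id
  have h1 : Tendsto (fun s : ℝ => Real.exp (-b * s)) atTop (𝓝 0) := by
    apply Real.tendsto_exp_atBot.comp
    apply Tendsto.const_mul_atTop_of_neg (neg_neg_iff_pos.mpr hb) tendsto_id
  have h2 : Tendsto (fun s : ℝ => s * Real.exp (-b * s)) atTop (𝓝 0) := by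
    have h3 := (Real.tendsto_pow_mul_exp_neg_atTop_nhds_zero 1).comp hbs
    have h4 := h3.const_mul (1 / b)
    rw [mul_zero] at h4
    refine h4.congr fun s => ?_
    simp only [Function.comp_apply, pow_one]
    field_simp
  have := (h1.const_mul C).add (h2.const_mul D)
  rw [mul_zero, mul_zero, add_zero] at this
  refine this.congr fun s => ?_
  ring

lemma growth_integrable {b : ℝ} (hb : 0 < b) {f : ℝ → ℝ} (hf : Continuous f)
    {C D : ℝ} (hD : 0 ≤ D) (hbd : ∀ τ, |f τ| ≤ C + D * |τ|) (t : ℝ) :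
    IntegrableOn (fun τ => Real.exp (-b * (τ - t)) * f τ) (Set.Ioi t) := by
  have hgint : Integrable
      (fun τ => (C + D * |t|) * Real.exp (-b * (τ - t)) + (2 * D / b) * Real.exp (-(b / 2) * (τ - t)))
      (volume.restrict (Set.Ioi t)) := by
    exact ((exp_shift_integrable hb t).const_mul _).add
      ((exp_shift_integrable (half_pos hb) t).const_mul (2 * D / b))
  refine Integrable.mono hgint ?_ ?_
  · exact ((continuous_const.mul (continuous_id.sub continuous_const)).rexp.mul hf).aestronglyMeasurable
  · filter_upwards [ae_restrict_mem measurableSet_Ioi] with τ hτ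
    have hs : (0:ℝ) ≤ τ - t := by simp only [Set.mem_Ioi] at hτ; linarith
    have hexp := (Real.exp_pos (-b * (τ - t))).le
    have h1 : |f τ| ≤ (C + D * |t|) + D * (τ - t) := by
      have := hbd τ
      have habs : |τ| ≤ (τ - t) + |t| := by
        calc |τ| = |(τ - t) + t| := by ring_nf
          _ ≤ |τ - t| + |t| := abs_add_le _ _
          _ = (τ - t) + |t| := by rw [abs_of_nonneg hs]
      nlinarith
    have h2 : ‖Real.exp (-b * (τ - t)) * f τ‖ ≤
        ((C + D * |t|) + D * (τ - t)) * Real.exp (-b * (τ - t)) := by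
      rw [norm_mul, Real.norm_eq_abs, Real.norm_eq_abs, Real.abs_exp, mul_comm]
      exact mul_le_mul_of_nonneg_right h1 hexp
    have h3 : D * (τ - t) * Real.exp (-b * (τ - t)) ≤
        (2 * D / b) * Real.exp (-(b / 2) * (τ - t)) := by
      have := key_bound hb hs
      have := mul_le_mul_of_nonneg_left this hD
      calc D * (τ - t) * Real.exp (-b * (τ - t))
          = D * ((τ - t) * Real.exp (-b * (τ - t))) := by ring
        _ ≤ D * ((2 / b) * Real.exp (-(b / 2) * (τ - t))) := this
        _ = (2 * D / b) * Real.exp (-(b / 2) * (τ - t)) := by ring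
    have h4 : (0:ℝ) ≤ (C + D * |t|) * Real.exp (-b * (τ - t)) +
        (2 * D / b) * Real.exp (-(b / 2) * (τ - t)) := by
      have h5 : (0:ℝ) ≤ C + D * |t| := le_trans (abs_nonneg (f t)) (by
        have := hbd t; nlinarith [abs_nonneg t])
      positivity
    rw [Real.norm_eq_abs (((C + D * |t|)) * Real.exp (-b * (τ - t)) + _), abs_of_nonneg h4]
    calc ‖Real.exp (-b * (τ - t)) * f τ‖
        ≤ ((C + D * |t|) + D * (τ - t)) * Real.exp (-b * (τ - t)) := h2
      _ = (C + D * |t|) * Real.exp (-b * (τ - t)) + D * (τ - t) * Real.exp (-b * (τ - t)) := by ring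
      _ ≤ _ := by linarith

/-- If `x_u' = η(x_u − x_z)` everywhere and `x_z` has derivative bounded by `γ`,
then `x_u − x_z` is bounded on `[t₀, ∞)` if and only if the stability condition
`x_u(t₀) = η ∫_{t₀}^∞ e^{−η(τ−t₀)} x_z(τ) dτ` holds. -/
theorem stmt_4 (η γ t₀ : ℝ) (hη : 0 < η) (hγ : 0 ≤ γ)
    (xz xu : ℝ → ℝ)
    (hxz : Differentiable ℝ xz) (hxz' : ∀ t, |deriv xz t| ≤ γ)
    (hxu : Differentiable ℝ xu)
    (hode : ∀ t, HasDerivAt xu (η * (xu t - xz t)) t) :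
    (∃ M : ℝ, ∀ t, t₀ ≤ t → |xu t - xz t| ≤ M) ↔
      xu t₀ = η * ∫ τ in Set.Ioi t₀, Real.exp (-η * (τ - t₀)) * xz τ := by
  -- Lipschitz bound on xz
  have hlip : ∀ s u : ℝ, |xz s - xz u| ≤ γ * |s - u| := by
    intro s u
    have := Convex.norm_image_sub_le_of_norm_deriv_le (s := (Set.univ : Set ℝ))
      (fun x _ => hxz x) (fun x _ => hxz' x) convex_univ (Set.mem_univ u) (Set.mem_univ s)
    simpa using this
  have hgrow : ∀ τ, |xz τ| ≤ (|xz t₀| + γ * |t₀|) + γ * |τ| := by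
    intro τ
    have h1 := hlip τ t₀
    have h2 : |xz τ| ≤ |xz τ - xz t₀| + |xz t₀| := by
      calc |xz τ| = |(xz τ - xz t₀) + xz t₀| := by ring_nf
        _ ≤ |xz τ - xz t₀| + |xz t₀| := abs_add_le _ _
    have h3 : |τ - t₀| ≤ |τ| + |t₀| := abs_sub _ _
    nlinarith
  have hcont : ∀ t : ℝ, Continuous (fun τ => Real.exp (-η * (τ - t)) * xz τ) := fun t =>
    (continuous_const.mul (continuous_id.sub continuous_const)).rexp.mul hxz.continuous
  have hint : ∀ t : ℝ, IntegrableOn (fun τ => Real.exp (-η * (τ - t)) * xz τ) (Set.Ioi t) :=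
    fun t => growth_integrable hη hxz.continuous hγ hgrow t
  -- the ODE identity
  have key : ∀ a b : ℝ, (∫ τ in a..b, (-η) * (Real.exp (-η * (τ - t₀)) * xz τ)) =
      Real.exp (-η * (b - t₀)) * xu b - Real.exp (-η * (a - t₀)) * xu a := by
    intro a b
    apply intervalIntegral.integral_eq_sub_of_hasDerivAt
    · intro t _
      have h1 : HasDerivAt (fun τ : ℝ => Real.exp (-η * (τ - t₀)))
          (Real.exp (-η * (t - t₀)) * (-η)) t := by
        have h0 : HasDerivAt (fun τ : ℝ => -η * (τ - t₀)) (-η) t := by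
          simpa using ((hasDerivAt_id t).sub_const t₀).const_mul (-η)
        simpa using h0.exp
      have := h1.mul (hode t)
      exact this.congr_deriv (by ring)
    · exact (continuous_const.mul (hcont t₀)).intervalIntegrable a b
  constructor
  · -- boundedness → stability condition
    rintro ⟨M, hM⟩
    set A := ∫ τ in Set.Ioi t₀, Real.exp (-η * (τ - t₀)) * xz τ with hA
    have h1 : Tendsto (fun b => ∫ τ in t₀..b, (-η) * (Real.exp (-η * (τ - t₀)) * xz τ))
        atTop (𝓝 ((-η) * A)) := by
      have := intervalIntegral_tendsto_integral_Ioi t₀ ((hint t₀).const_mul (-η)) tendsto_id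
      rwa [MeasureTheory.integral_const_mul] at this
    have h2 : Tendsto (fun b => Real.exp (-η * (b - t₀)) * xu b) atTop (𝓝 0) := by
      have hg : Tendsto (fun b => ((M + |xz t₀|) + γ * (b - t₀)) * Real.exp (-η * (b - t₀)))
          atTop (𝓝 0) := by
        have hcomp : Tendsto (fun b : ℝ => b - t₀) atTop atTop :=
          tendsto_atTop_add_const_right atTop (-t₀) tendsto_id |>.congr (fun x => by simp [sub_eq_add_neg])
        exact (lin_mul_exp_tendsto hη (M + |xz t₀|) γ).comp hcomp
      apply squeeze_zero_norm' ?_ hg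
      · filter_upwards [eventually_ge_atTop t₀] with b hb
        rw [norm_mul, Real.norm_eq_abs, Real.norm_eq_abs, Real.abs_exp, mul_comm]
        apply mul_le_mul_of_nonneg_right _ (Real.exp_pos _).le
        have hxub : |xu b| ≤ M + |xz t₀| + γ * (b - t₀) := by
          have hb1 := hM b hb
          have hb2 := hlip b t₀
          have hb3 : |xu b| ≤ |xu b - xz b| + |xz b| := by
            calc |xu b| = |(xu b - xz b) + xz b| := by ring_nf
              _ ≤ |xu b - xz b| + |xz b| := abs_add_le _ _
          have hb4 : |xz b| ≤ |xz t₀| + γ * (b - t₀) := by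
            have hb5 : |xz b| ≤ |xz b - xz t₀| + |xz t₀| := by
              calc |xz b| = |(xz b - xz t₀) + xz t₀| := by ring_nf
                _ ≤ |xz b - xz t₀| + |xz t₀| := abs_add_le _ _
            rw [abs_of_nonneg (by linarith : (0:ℝ) ≤ b - t₀)] at hb2
            linarith
          linarith
        linarith
    have h3 : Tendsto (fun b => Real.exp (-η * (b - t₀)) * xu b - xu t₀) atTop (𝓝 (-η * A)) := by
      refine h1.congr fun b => ?_
      rw [key t₀ b]
      simp
    have h4 : Tendsto (fun b => Real.exp (-η * (b - t₀)) * xu b - xu t₀) atTop (𝓝 (0 - xu t₀)) :=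
      h2.sub_const (xu t₀)
    have h5 := tendsto_nhds_unique h3 h4
    rw [hA]
    linarith
  · -- stability condition → boundedness
    intro h
    refine ⟨4 * γ / η, fun t ht => ?_⟩
    -- formula at time t
    have hxut : xu t = η * ∫ τ in Set.Ioi t, Real.exp (-η * (τ - t)) * xz τ := by
      have hsplit : (∫ τ in Set.Ioi t₀, Real.exp (-η * (τ - t₀)) * xz τ) =
          (∫ τ in Set.Ioc t₀ t, Real.exp (-η * (τ - t₀)) * xz τ) +
          ∫ τ in Set.Ioi t, Real.exp (-η * (τ - t₀)) * xz τ := by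
        rw [← MeasureTheory.setIntegral_union (Set.Ioc_disjoint_Ioi le_rfl) measurableSet_Ioi
          ((hint t₀).mono_set Set.Ioc_subset_Ioi_self)
          ((hint t₀).mono_set (Set.Ioi_subset_Ioi ht)),
          Set.Ioc_union_Ioi_eq_Ioi ht]
      have hk := key t₀ t
      rw [intervalIntegral.integral_const_mul,
        intervalIntegral.integral_of_le ht] at hk
      have heq : Real.exp (-η * (t - t₀)) * xu t =
          η * ∫ τ in Set.Ioi t, Real.exp (-η * (τ - t₀)) * xz τ := by
        have h0 : Real.exp (-η * (t₀ - t₀)) = 1 := by norm_num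
        rw [h0, h, hsplit] at hk
        linarith
      have hmul : Real.exp (η * (t - t₀)) *
          (∫ τ in Set.Ioi t, Real.exp (-η * (τ - t₀)) * xz τ) =
          ∫ τ in Set.Ioi t, Real.exp (-η * (τ - t)) * xz τ := by
        rw [← MeasureTheory.integral_const_mul]
        refine setIntegral_congr_fun measurableSet_Ioi fun τ _ => ?_
        rw [← mul_assoc, ← Real.exp_add]
        ring_nf
      have hcancel : Real.exp (η * (t - t₀)) * Real.exp (-η * (t - t₀)) = 1 := by
        rw [← Real.exp_add]; ring_nf; exact Real.exp_zero
      calc xu t = Real.exp (η * (t - t₀)) * (Real.exp (-η * (t - t₀)) * xu t) := by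
            rw [← mul_assoc, hcancel, one_mul]
        _ = Real.exp (η * (t - t₀)) * (η * ∫ τ in Set.Ioi t, Real.exp (-η * (τ - t₀)) * xz τ) := by
            rw [heq]
        _ = η * ∫ τ in Set.Ioi t, Real.exp (-η * (τ - t)) * xz τ := by
            rw [← hmul]; ring
    have hxzt : xz t = η * ∫ τ in Set.Ioi t, Real.exp (-η * (τ - t)) * xz t := by
      rw [MeasureTheory.integral_mul_const (xz t) (fun τ => Real.exp (-η * (τ - t))), exp_shift_integral hη t]
      field_simp
    have hdiff : xu t - xz t =
        η * ∫ τ in Set.Ioi t, Real.exp (-η * (τ - t)) * (xz τ - xz t) := by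
      have hsub : (∫ τ in Set.Ioi t, Real.exp (-η * (τ - t)) * (xz τ - xz t)) =
          (∫ τ in Set.Ioi t, Real.exp (-η * (τ - t)) * xz τ) -
          ∫ τ in Set.Ioi t, Real.exp (-η * (τ - t)) * xz t := by
        rw [← MeasureTheory.integral_sub (hint t)
          ((exp_shift_integrable hη t).mul_const (xz t))]
        exact MeasureTheory.integral_congr_ae (Filter.Eventually.of_forall fun τ => by ring)
      rw [hsub, mul_sub, ← hxut, ← hxzt]
    rw [hdiff]
    have hbound : ‖∫ τ in Set.Ioi t, Real.exp (-η * (τ - t)) * (xz τ - xz t)‖ ≤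
        ∫ τ in Set.Ioi t, (2 * γ / η) * Real.exp (-(η / 2) * (τ - t)) := by
      apply MeasureTheory.norm_integral_le_of_norm_le
        (((exp_shift_integrable (half_pos hη) t)).const_mul (2 * γ / η))
      filter_upwards [ae_restrict_mem measurableSet_Ioi] with τ hτ
      have hs : (0:ℝ) ≤ τ - t := by simp only [Set.mem_Ioi] at hτ; linarith
      rw [norm_mul, Real.norm_eq_abs, Real.norm_eq_abs, Real.abs_exp]
      have h1 : |xz τ - xz t| ≤ γ * (τ - t) := by
        have := hlip τ t
        rwa [abs_of_nonneg hs] at this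
      calc Real.exp (-η * (τ - t)) * |xz τ - xz t|
          ≤ Real.exp (-η * (τ - t)) * (γ * (τ - t)) :=
            mul_le_mul_of_nonneg_left h1 (Real.exp_pos _).le
        _ = γ * ((τ - t) * Real.exp (-η * (τ - t))) := by ring
        _ ≤ γ * ((2 / η) * Real.exp (-(η / 2) * (τ - t))) :=
            mul_le_mul_of_nonneg_left (key_bound hη hs) hγ
        _ = (2 * γ / η) * Real.exp (-(η / 2) * (τ - t)) := by ring
    have hval : (∫ τ in Set.Ioi t, (2 * γ / η) * Real.exp (-(η / 2) * (τ - t))) = 4 * γ / η ^ 2 := by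
      rw [MeasureTheory.integral_const_mul, exp_shift_integral (half_pos hη) t]
      field_simp
      ring
    rw [hval] at hbound
    rw [abs_mul, abs_of_pos hη]
    rw [Real.norm_eq_abs] at hbound
    calc η * |∫ τ in Set.Ioi t, Real.exp (-η * (τ - t)) * (xz τ - xz t)|
        ≤ η * (4 * γ / η ^ 2) := mul_le_mul_of_nonneg_left hbound hη.le
      _ = 4 * γ / η := by field_simp
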